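/- arXiv:2012.03770 — 2 statements merged into one kernel-verified Lean document; each statement's English description precedes it below -/
import Mathlib

section
/- Let X be an n×n matrix over a field, let i_1 < i_2 < ... < i_k be row indices, and suppose row i_j of X equals f(c_j) for j = 1,...,k, where c_1,...,c_k are pairwise distinct scalars and f is a function from {c_1,...,c_k} to row vectors of length n. Let X' be the matrix obtained from X by replacing, for each j = 1,...,k, row i_j by the row (c_j−c_1)(c_j−c_2)···(c_j−c_{j−1}) · D^{j−1}f(c_1,...,c_j), where D^{j−1}f(c_1,...,c_j) = Σ_{r=1}^{j} f(c_r)/∏_{s≠r, 1≤s≤j}(c_r − c_s) is the (j−1)-st divided difference of f with respect to the nodes c_1,...,c_j (for j = 1 the row is f(c_1) itself). Then det(X') = det(X). -/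
/-- Determinant-preserving divided-difference row operations.  Let `X` be an
`n × n` matrix over a field whose rows `idx 0 < idx 1 < … < idx (k-1)` are `f (c 0), …,
f (c (k-1))` for pairwise distinct nodes `c j`.  Replacing, for each `j`, row `idx j` by
`(c j − c 0)⋯(c j − c (j-1))` times the `j`-th divided difference of `f` at the nodes
`c 0, …, c j` (and leaving all other rows unchanged) produces a matrix `X'` with
`det X' = det X`. -/
theorem stmt2 {F : Type*} [Field F] (n k : ℕ)
    (X X' : Matrix (Fin n) (Fin n) F)
    (idx : Fin k → Fin n) (hidx : StrictMono idx)
    (c : Fin k → F) (hc : Function.Injective c)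
    (f : F → (Fin n → F))
    (hX : ∀ j : Fin k, X (idx j) = f (c j))
    (hX'1 : ∀ r : Fin n, (∀ j : Fin k, idx j ≠ r) → X' r = X r)
    (hX'2 : ∀ j : Fin k,
      X' (idx j) = (∏ s ∈ Finset.Iio j, (c j - c s)) •
        ∑ r ∈ Finset.Iic j,
          (∏ s ∈ (Finset.Iic j).erase r, (c r - c s))⁻¹ • f (c r)) :
    X'.det = X.det := by
  classical
  have hinj : Function.Injective idx := hidx.injective
  set a : Fin k → Fin k → F := fun j r =>
    (∏ s ∈ Finset.Iio j, (c j - c s)) *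
      (∏ s ∈ (Finset.Iic j).erase r, (c r - c s))⁻¹ with ha
  set M : Matrix (Fin n) (Fin n) F := fun i m =>
    if h : ∃ j : Fin k, idx j = i then
      if h2 : ∃ r : Fin k, idx r = m then
        if h2.choose ≤ h.choose then a h.choose h2.choose else 0
      else 0
    else if m = i then 1 else 0 with hM
  have key : ∀ (r : Fin k) (h : ∃ j' : Fin k, idx j' = idx r), h.choose = r :=
    fun r h => hinj h.choose_spec
  have hMval : ∀ j r : Fin k, M (idx j) (idx r) = if r ≤ j then a j r else 0 := by
    intro j r
    simp only [hM]
    rw [dif_pos ⟨j, rfl⟩, dif_pos ⟨r, rfl⟩, key j ⟨j, rfl⟩, key r ⟨r, rfl⟩]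
  have hajj : ∀ j : Fin k, a j j = 1 := by
    intro j
    rw [ha]
    simp only [Finset.Iic_erase]
    apply mul_inv_cancel₀
    rw [Finset.prod_ne_zero_iff]
    intro s hs
    rw [Finset.mem_Iio] at hs
    exact sub_ne_zero_of_ne (fun e => absurd (hc e) hs.ne')
  have htri : M.BlockTriangular OrderDual.toDual := by
    intro i m him
    rw [OrderDual.toDual_lt_toDual] at him
    simp only [hM]
    split_ifs with h h2 h3 h4
    · exfalso
      have hmi : m ≤ i := by
        rw [← h2.choose_spec, ← h.choose_spec]
        exact hidx.monotone h3
      exact absurd him (not_lt.mpr hmi)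
    · rfl
    · rfl
    · exact absurd h4 him.ne'
    · rfl
  have hdiag : ∀ i : Fin n, M i i = 1 := by
    intro i
    by_cases h : ∃ j : Fin k, idx j = i
    · obtain ⟨j, hj⟩ := h
      subst hj
      rw [hMval j j, if_pos le_rfl, hajj]
    · simp only [hM]
      rw [dif_neg h]
      simp
  have hXX : X' = M * X := by
    funext i m'
    rw [Matrix.mul_apply]
    by_cases h : ∃ j : Fin k, idx j = i
    · obtain ⟨j, hj⟩ := h
      subst hj
      have hzero : ∀ m ∈ Finset.univ, m ∉ Finset.image idx Finset.univ →
          M (idx j) m * X m m' = 0 := by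
        intro m _ hm
        have h2 : ¬ ∃ r : Fin k, idx r = m := by
          intro ⟨r, hr⟩; exact hm (Finset.mem_image.mpr ⟨r, Finset.mem_univ r, hr⟩)
        simp only [hM]
        rw [dif_pos ⟨j, rfl⟩, dif_neg h2, zero_mul]
      rw [← Finset.sum_subset (Finset.subset_univ _) hzero,
        Finset.sum_image (fun x _ y _ h => hinj h)]
      have : ∀ r : Fin k, M (idx j) (idx r) * X (idx r) m'
          = if r ≤ j then a j r * f (c r) m' else 0 := by
        intro r
        rw [hMval, hX r, ite_mul, zero_mul]
      simp only [this]
      rw [hX'2 j]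
      simp only [Pi.smul_apply, Finset.sum_apply, smul_eq_mul, Finset.mul_sum, ha]
      rw [← Finset.sum_filter]
      have hfil : Finset.filter (· ≤ j) Finset.univ = Finset.Iic j := by
        ext x; simp
      rw [hfil]
      exact Finset.sum_congr rfl (fun r _ => by ring)
    · rw [hX'1 i (fun j hj => h ⟨j, hj⟩)]
      have : ∀ m : Fin n, M i m = if m = i then 1 else 0 := by
        intro m; simp only [hM]; rw [dif_neg h]
      simp only [this, ite_mul, one_mul, zero_mul, Finset.sum_ite_eq',
        Finset.mem_univ, if_pos]
  rw [hXX, Matrix.det_mul, Matrix.det_of_lowerTriangular M htri]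
  simp [hdiag]
end

section
/- Let S ≥ 1, fix i ∈ {1,...,S}, and let ζ = e^{2πi/3}. For each pair (j,l) with j ∈ {1,...,S}, j ≠ i, and l ∈ {1,...,S}, fix an integer e_{j,l} and complex numbers F^{j,l}_+, F^{j,l}_−; for each l ∈ {1,...,S}, fix an integer d_l and complex numbers f^l_+, f^l_−, g^l_+, g^l_−. Define two 2S×2S complex matrices C_1 and C_2, organized into S×S blocks of size 2×2: for every j ≠ i, both C_1 and C_2 have the block in block-row j and block-column l equal to [[ζ^{e} F_+ − ζ^{−e} F_− , ζ^{e−2} F_+ − ζ^{−(e−2)} F_−], [ζ^{e+2} F_+ − ζ^{−(e+2)} F_− , ζ^{e} F_+ − ζ^{−e} F_−]] where e = e_{j,l} and F_± = F^{j,l}_±. In block-row i, with d = d_l, f_± = f^l_±, g_± = g^l_±: the block of C_1 in block-column l is [[(1+ζ)ζ^{d} g_+ − (1+ζ^{−1})ζ^{−d} g_− , (1+ζ)ζ^{d−2} g_+ − (1+ζ^{−1})ζ^{−(d−2)} g_−], [ζ^{d+2} f_+ − ζ^{−(d+2)} f_− , ζ^{d} f_+ − ζ^{−d} f_−]], and the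 block of C_2 in block-column l is [[ζ^{d} f_+ − ζ^{−d} f_− , ζ^{d−2} f_+ − ζ^{−(d−2)} f_−], [−ζ^{d+3} g_+ + ζ^{−(d+3)} g_− , −ζ^{d+1} g_+ + ζ^{−(d+1)} g_−]]. Then det(C_1) + det(C_2) = 0. -/
open Complex Real

/-- `ζ = e^{2πi/3}`, the primitive cube root of unity. -/
noncomputable def zeta3 : ℂ := Complex.exp (2 * Real.pi * Complex.I / 3)

lemma zeta3_ne_zero : zeta3 ≠ 0 := Complex.exp_ne_zero _

lemma zeta3_prim : IsPrimitiveRoot zeta3 3 := by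
  have := Complex.isPrimitiveRoot_exp 3 (by norm_num)
  simpa [zeta3] using this

lemma zeta3_pow_three : zeta3 ^ (3:ℕ) = 1 := zeta3_prim.pow_eq_one

lemma zeta3_sum : 1 + zeta3 + zeta3 ^ 2 = 0 := by
  have h1 : zeta3 ≠ 1 := zeta3_prim.ne_one (by norm_num)
  have h : (zeta3 - 1) * (1 + zeta3 + zeta3 ^ 2) = 0 := by
    linear_combination zeta3_pow_three
  rcases mul_eq_zero.1 h with h' | h'
  · exact absurd (by linear_combination h') h1
  · exact h'

-- row-update commutation and swap
lemma updRow_comm {n : Type*} [DecidableEq n] [Fintype n] (B : Matrix n n ℂ)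
    {r1 r2 : n} (h : r1 ≠ r2) (x y : n → ℂ) :
    (B.updateRow r1 x).updateRow r2 y = (B.updateRow r2 y).updateRow r1 x := by
  ext r c
  rcases eq_or_ne r r1 with rfl | h1 <;> rcases eq_or_ne r r2 with rfl | h2 <;>
    simp_all [Matrix.updateRow_apply]

lemma det_swap_rows {n : Type*} [DecidableEq n] [Fintype n] (B : Matrix n n ℂ)
    {r1 r2 : n} (h : r1 ≠ r2) (x y : n → ℂ) :
    ((B.updateRow r1 x).updateRow r2 y).det = -((B.updateRow r1 y).updateRow r2 x).det := by
  have hmat : (B.updateRow r1 x).updateRow r2 y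
      = ((B.updateRow r1 y).updateRow r2 x).submatrix (Equiv.swap r1 r2) id := by
    ext r c
    rcases eq_or_ne r r1 with rfl | h1 <;> rcases eq_or_ne r r2 with rfl | h2 <;>
      simp_all [Matrix.updateRow_apply, Matrix.submatrix_apply, Equiv.swap_apply_def]
  rw [hmat, Matrix.det_permute, Equiv.Perm.sign_swap h]
  simp

/-- general rank-based vanishing lemma -/
lemma aux_det_zero {S : ℕ} (i : Fin S) (a b : Fin 2) (hab : a ≠ b)
    (N : Matrix (Fin S × Fin 2) (Fin S × Fin 2) ℂ)
    (h0 : ∀ j l, N (j, a) (l, b) = 0) (h1 : ∀ l, N (i, b) (l, b) = 0) :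
    N.det = 0 := by
  rw [← Matrix.exists_vecMul_eq_zero_iff]
  -- the S+1 vectors in ℂ^S
  set r : Option (Fin S) → Fin S × Fin 2 := fun k => k.elim (i, b) (fun j => (j, a)) with hr
  set w : Option (Fin S) → (Fin S → ℂ) := fun k l => N (r k) (l, a) with hw
  have hdep : ¬ LinearIndependent ℂ w := by
    intro hli
    have := hli.fintype_card_le_finrank
    rw [Module.finrank_fintype_fun_eq_card] at this
    simp [Fintype.card_option] at this
  obtain ⟨g, hg, k0, hk0⟩ := Fintype.not_linearIndependent_iff.1 hdep
  refine ⟨fun p => (if p.2 = a then g (some p.1) else 0) +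
      (if p = (i, b) then g none else 0), ?_, ?_⟩
  · intro hv
    have := congrFun hv (r k0)
    cases k0 with
    | none =>
        simp only [hr, Option.elim] at this
        simp [hab.symm, Prod.ext_iff] at this
        exact hk0 this
    | some j =>
        simp only [hr, Option.elim] at this
        simp [Prod.ext_iff, hab] at this
        exact hk0 this
  · funext q
    obtain ⟨l, ε'⟩ := q
    simp only [Pi.zero_apply]
    have hsum : ∀ ε' : Fin 2,
        (Matrix.vecMul (fun p => (if p.2 = a then g (some p.1) else 0) +
          (if p = (i, b) then g none else 0)) N) (l, ε')
        = (∑ j : Fin S, g (some j) * N (j, a) (l, ε')) + g none * N (i, b) (l, ε') := by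
      intro ε'
      simp only [Matrix.vecMul, dotProduct, add_mul, ite_mul,
        zero_mul, Finset.sum_add_distrib]
      congr 1
      · rw [Fintype.sum_prod_type]
        simp
      · simp
    have hcase : ε' = a ∨ ε' = b := by
      fin_cases a <;> fin_cases b <;> fin_cases ε' <;> simp_all
    rcases hcase with h | h
    · subst h
      rw [hsum]
      have := congrFun hg l
      simp only [Fintype.sum_option, hw, hr, Option.elim, Finset.sum_apply, Pi.smul_apply,
        smul_eq_mul, Pi.zero_apply] at this
      linear_combination this
    · subst h
      rw [hsum]
      simp [h0, h1]

noncomputable def auxT (S : ℕ) : Matrix (Fin S × Fin 2) (Fin S × Fin 2) ℂ :=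
  fun p q => if p.1 = q.1 then
    (if p.2 = 0 then (if q.2 = 0 then 1 else (zeta3 ^ 2)⁻¹)
     else (if q.2 = 0 then 1 else zeta3 ^ 2)) else 0

noncomputable def auxR (S : ℕ) (i : Fin S) : Matrix (Fin S × Fin 2) (Fin S × Fin 2) ℂ :=
  fun p q => if q.1 = p.1 then
    (if p.1 = i then (if p.2 = q.2 then 1 else 0)
     else if p.2 = 0 then 1 else if q.2 = 0 then zeta3 ^ 2 else (zeta3 ^ 2)⁻¹) else 0

noncomputable def auxB (S : ℕ) (i : Fin S) (e : Fin S → Fin S → ℤ)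
    (Fp Fm : Fin S → Fin S → ℂ) : Matrix (Fin S × Fin 2) (Fin S × Fin 2) ℂ :=
  fun p q => if p.1 = i then 0 else
    if p.2 = 0 then (if q.2 = 0 then zeta3 ^ (e p.1 q.1) * Fp p.1 q.1 else 0)
    else (if q.2 = 1 then -(zeta3 ^ (-(e p.1 q.1)) * Fm p.1 q.1) else 0)

noncomputable def rowP (S : ℕ) (d : Fin S → ℤ) (c : Fin S → ℂ) : Fin S × Fin 2 → ℂ :=
  fun q => if q.2 = 0 then zeta3 ^ (d q.1) * c q.1 else 0

noncomputable def rowM (S : ℕ) (d : Fin S → ℤ) (c : Fin S → ℂ) : Fin S × Fin 2 → ℂ :=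
  fun q => if q.2 = 1 then zeta3 ^ (-(d q.1)) * c q.1 else 0


lemma sumCollapse7 {S : ℕ} (g : Fin S × Fin 2 → ℂ) (j : Fin S)
    (h : ∀ x : Fin S × Fin 2, x.1 ≠ j → g x = 0) :
    ∑ x : Fin S × Fin 2, g x = ∑ τ : Fin 2, g (j, τ) := by
  rw [Fintype.sum_prod_type]
  refine Finset.sum_eq_single_of_mem j (Finset.mem_univ j) ?_
  intro b _ hb
  exact Finset.sum_eq_zero (fun τ _ => h (b, τ) hb)

lemma mul3_apply {S : ℕ} (i : Fin S) (E : Matrix (Fin S × Fin 2) (Fin S × Fin 2) ℂ)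
    (j l : Fin S) (ε ε' : Fin 2) :
    (auxR S i * E * auxT S) (j, ε) (l, ε')
    = ∑ τ : Fin 2, ∑ σ : Fin 2,
        auxR S i (j, ε) (j, τ) * E (j, τ) (l, σ) * auxT S (l, σ) (l, ε') := by
  rw [Matrix.mul_apply]
  rw [sumCollapse7 (fun y => (auxR S i * E) (j, ε) y * auxT S y (l, ε')) l
    (fun y hy => by simp [auxT, hy, Ne.symm hy])]
  have : ∀ σ : Fin 2, (auxR S i * E) (j, ε) (l, σ)
      = ∑ τ : Fin 2, auxR S i (j, ε) (j, τ) * E (j, τ) (l, σ) := by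
    intro σ
    rw [Matrix.mul_apply]
    exact sumCollapse7 (fun x => auxR S i (j, ε) x * E x (l, σ)) j
      (fun x hx => by simp [auxR, hx, Ne.symm hx])
  simp only [this, Finset.sum_mul]
  rw [Finset.sum_comm]


lemma det_key {S : ℕ} (i : Fin S) (B : Matrix (Fin S × Fin 2) (Fin S × Fin 2) ℂ)
    (Gp Gm Fpv Fmv : Fin S × Fin 2 → ℂ)
    (hGp : ∀ l, Gp (l,1) = 0) (hGm : ∀ l, Gm (l,0) = 0)
    (hFp : ∀ l, Fpv (l,1) = 0) (hFm : ∀ l, Fmv (l,0) = 0)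
    (hB0 : ∀ j l, j ≠ i → B (j,0) (l,1) = 0) (hB1 : ∀ j l, j ≠ i → B (j,1) (l,0) = 0) :
    ((B.updateRow (i,0) ((1+zeta3)•Gp + (-(1+zeta3⁻¹))•Gm)).updateRow (i,1)
        ((zeta3^2)•Fpv + (-(zeta3^2)⁻¹)•Fmv)).det
    + ((B.updateRow (i,0) (Fpv + (-1:ℂ)•Fmv)).updateRow (i,1) ((-1:ℂ)•Gp + Gm)).det = 0 := by
  have hne : ((i,0) : Fin S × Fin 2) ≠ (i,1) := by simp
  have expand : ∀ (a b c d : ℂ) (x1 x2 y1 y2 : Fin S × Fin 2 → ℂ),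
      ((B.updateRow (i,0) (a•x1 + b•x2)).updateRow (i,1) (c•y1 + d•y2)).det
      = a*c*((B.updateRow (i,0) x1).updateRow (i,1) y1).det
        + a*d*((B.updateRow (i,0) x1).updateRow (i,1) y2).det
        + b*c*((B.updateRow (i,0) x2).updateRow (i,1) y1).det
        + b*d*((B.updateRow (i,0) x2).updateRow (i,1) y2).det := by
    intro a b c d x1 x2 y1 y2
    rw [Matrix.det_updateRow_add, Matrix.det_updateRow_smul, Matrix.det_updateRow_smul,
      updRow_comm B hne, Matrix.det_updateRow_add, Matrix.det_updateRow_smul,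
      Matrix.det_updateRow_smul,
      updRow_comm B hne (a • x1 + b • x2) y2, Matrix.det_updateRow_add,
      Matrix.det_updateRow_smul, Matrix.det_updateRow_smul,
      ← updRow_comm B hne x1 y1, ← updRow_comm B hne x2 y1,
      ← updRow_comm B hne x1 y2, ← updRow_comm B hne x2 y2]
    ring
  have e1 := expand (1+zeta3) (-(1+zeta3⁻¹)) (zeta3^2) (-(zeta3^2)⁻¹) Gp Gm Fpv Fmv
  have e2' : ((B.updateRow (i,0) (Fpv + (-1:ℂ)•Fmv)).updateRow (i,1) ((-1:ℂ)•Gp + Gm)).det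
      = (1:ℂ)*(-1)*((B.updateRow (i,0) Fpv).updateRow (i,1) Gp).det
        + (1:ℂ)*1*((B.updateRow (i,0) Fpv).updateRow (i,1) Gm).det
        + (-1:ℂ)*(-1)*((B.updateRow (i,0) Fmv).updateRow (i,1) Gp).det
        + (-1:ℂ)*1*((B.updateRow (i,0) Fmv).updateRow (i,1) Gm).det := by
    have := expand 1 (-1) (-1) 1 Fpv Fmv Gp Gm
    simpa using this
  -- vanishing terms
  have hpp : ((B.updateRow (i,0) Gp).updateRow (i,1) Fpv).det = 0 := by
    apply aux_det_zero i 0 1 (by decide)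
    · intro j l
      rcases eq_or_ne j i with rfl | hj
      · rw [Matrix.updateRow_ne hne, Matrix.updateRow_self]; exact hGp l
      · rw [Matrix.updateRow_ne (by simp [hj]), Matrix.updateRow_ne (by simp [hj])]
        exact hB0 j l hj
    · intro l
      rw [Matrix.updateRow_self]; exact hFp l
  have hmm : ((B.updateRow (i,0) Gm).updateRow (i,1) Fmv).det = 0 := by
    apply aux_det_zero i 1 0 (by decide)
    · intro j l
      rcases eq_or_ne j i with rfl | hj
      · rw [Matrix.updateRow_self]; exact hFm l
      · rw [Matrix.updateRow_ne (by simp [hj]), Matrix.updateRow_ne (by simp [hj])]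
        exact hB1 j l hj
    · intro l
      rw [Matrix.updateRow_ne hne, Matrix.updateRow_self]; exact hGm l
  have s1 := det_swap_rows B hne Fpv Gp
  have s2 := det_swap_rows B hne Fpv Gm
  have s3 := det_swap_rows B hne Fmv Gp
  have s4 := det_swap_rows B hne Fmv Gm
  -- so e2 in terms of Φ(G?,F?)
  rw [e1, e2', s1, s2, s3, s4, hpp, hmm]
  set p := ((B.updateRow (i,0) Gp).updateRow (i,1) Fmv).det with hp
  set q := ((B.updateRow (i,0) Gm).updateRow (i,1) Fpv).det with hq
  have hz2 : zeta3^2 ≠ 0 := pow_ne_zero _ zeta3_ne_zero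
  have hzinv : zeta3⁻¹ = zeta3 ^ 2 :=
    inv_eq_of_mul_eq_one_right (by linear_combination zeta3_pow_three)
  field_simp
  ring_nf
  rw [hzinv]
  linear_combination (-p - zeta3^2*q) * zeta3_sum + (-(zeta3+zeta3^2)*p + (zeta3^3+1)*(1-zeta3^4-zeta3^2)*q - zeta3^3*q) * zeta3_pow_three

set_option maxHeartbeats 2000000 in
/-- The `2S × 2S` block matrices `C₁` and `C₂` (indexed by pairs
`(block, ε) ∈ Fin S × Fin 2`), which agree in every block row `j ≠ i` with the standard
block pattern `ζ^{e+2ε−2ε'} F₊ − ζ^{−(e+2ε−2ε')} F₋`, and whose `i`-th block rows are as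
described, satisfy `det C₁ + det C₂ = 0`. -/
theorem stmt7 (S : ℕ) (hS : 1 ≤ S) (i : Fin S)
    (e : Fin S → Fin S → ℤ) (Fp Fm : Fin S → Fin S → ℂ)
    (d : Fin S → ℤ) (fp fm gp gm : Fin S → ℂ)
    (C1 C2 : Matrix (Fin S × Fin 2) (Fin S × Fin 2) ℂ)
    (hC1off : ∀ j : Fin S, j ≠ i → ∀ (ε : Fin 2) (l : Fin S) (ε' : Fin 2),
      C1 (j, ε) (l, ε') =
        zeta3 ^ (e j l + 2 * (ε : ℤ) - 2 * (ε' : ℤ)) * Fp j l -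
          zeta3 ^ (-(e j l + 2 * (ε : ℤ) - 2 * (ε' : ℤ))) * Fm j l)
    (hC2off : ∀ j : Fin S, j ≠ i → ∀ (ε : Fin 2) (l : Fin S) (ε' : Fin 2),
      C2 (j, ε) (l, ε') = C1 (j, ε) (l, ε'))
    (hC1i0 : ∀ (l : Fin S) (ε' : Fin 2),
      C1 (i, 0) (l, ε') =
        (1 + zeta3) * zeta3 ^ (d l - 2 * (ε' : ℤ)) * gp l -
          (1 + zeta3⁻¹) * zeta3 ^ (-(d l - 2 * (ε' : ℤ))) * gm l)
    (hC1i1 : ∀ (l : Fin S) (ε' : Fin 2),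
      C1 (i, 1) (l, ε') =
        zeta3 ^ (d l + 2 - 2 * (ε' : ℤ)) * fp l -
          zeta3 ^ (-(d l + 2 - 2 * (ε' : ℤ))) * fm l)
    (hC2i0 : ∀ (l : Fin S) (ε' : Fin 2),
      C2 (i, 0) (l, ε') =
        zeta3 ^ (d l - 2 * (ε' : ℤ)) * fp l -
          zeta3 ^ (-(d l - 2 * (ε' : ℤ))) * fm l)
    (hC2i1 : ∀ (l : Fin S) (ε' : Fin 2),
      C2 (i, 1) (l, ε') =
        -(zeta3 ^ (d l + 3 - 2 * (ε' : ℤ)) * gp l) +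
          zeta3 ^ (-(d l + 3 - 2 * (ε' : ℤ))) * gm l) :
    C1.det + C2.det = 0 := by
  have hz := zeta3_ne_zero
  have hd : ∀ n : ℤ, zeta3 ^ n ≠ 0 := fun n => zpow_ne_zero n hz
  have h1z : zeta3 ^ (1:ℤ) = zeta3 := zpow_one _
  have h2z : zeta3 ^ (2:ℤ) = zeta3 ^ (2:ℕ) := by norm_cast
  have h3z : zeta3 ^ (3:ℤ) = zeta3 ^ (3:ℕ) := by norm_cast
  have h4z : zeta3 ^ (4:ℤ) = zeta3 ^ (4:ℕ) := by norm_cast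
  set E1 : Matrix (Fin S × Fin 2) (Fin S × Fin 2) ℂ :=
    ((auxB S i e Fp Fm).updateRow (i,0)
        ((1+zeta3) • rowP S d gp + (-(1+zeta3⁻¹)) • rowM S d gm)).updateRow (i,1)
        ((zeta3 ^ 2) • rowP S d fp + (-(zeta3 ^ 2)⁻¹) • rowM S d fm) with hE1
  set E2 : Matrix (Fin S × Fin 2) (Fin S × Fin 2) ℂ :=
    ((auxB S i e Fp Fm).updateRow (i,0)
        (rowP S d fp + (-1:ℂ) • rowM S d fm)).updateRow (i,1)
        ((-1:ℂ) • rowP S d gp + rowM S d gm) with hE2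
  have hfac1 : C1 = auxR S i * E1 * auxT S := by
    ext ⟨j, ε⟩ ⟨l, ε'⟩
    rw [mul3_apply]
    rcases eq_or_ne j i with rfl | hj
    · fin_cases ε <;> fin_cases ε' <;>
        simp [hE1, hC1i0, hC1i1, Fin.sum_univ_two, auxR, auxT, auxB, rowP, rowM,
          Matrix.updateRow_apply, Prod.ext_iff,
          zpow_add₀ hz, zpow_sub₀ hz, zpow_neg, h1z, h2z, h3z, h4z] <;>
        (try (field_simp [hz, hd])) <;> (try (generalize zeta3 ^ (d l) = w)) <;>
        (try (generalize zeta3 ^ (e j l) = w)) <;> (try ring)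
    · fin_cases ε <;> fin_cases ε' <;>
        simp [hE1, hC1off j hj, Fin.sum_univ_two, auxR, auxT, auxB, rowP, rowM,
          Matrix.updateRow_apply, Prod.ext_iff, hj,
          zpow_add₀ hz, zpow_sub₀ hz, zpow_neg, h1z, h2z, h3z, h4z] <;>
        (try (field_simp [hz, hd])) <;> (try (generalize zeta3 ^ (d l) = w)) <;>
        (try (generalize zeta3 ^ (e j l) = w)) <;> (try ring)
  have hfac2 : C2 = auxR S i * E2 * auxT S := by
    ext ⟨j, ε⟩ ⟨l, ε'⟩
    rw [mul3_apply]
    rcases eq_or_ne j i with rfl | hj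
    · fin_cases ε <;> fin_cases ε' <;>
        simp [hE2, hC2i0, hC2i1, Fin.sum_univ_two, auxR, auxT, auxB, rowP, rowM,
          Matrix.updateRow_apply, Prod.ext_iff, zeta3_pow_three,
          zpow_add₀ hz, zpow_sub₀ hz, zpow_neg, h1z, h2z, h3z, h4z] <;>
        (try (field_simp [hz, hd])) <;> (try (generalize zeta3 ^ (d l) = w)) <;>
        (try (generalize zeta3 ^ (e j l) = w)) <;> (try ring)
    · fin_cases ε <;> fin_cases ε' <;>
        simp [hE2, hC2off j hj, hC1off j hj, Fin.sum_univ_two, auxR, auxT, auxB, rowP, rowM,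
          Matrix.updateRow_apply, Prod.ext_iff, hj, zeta3_pow_three,
          zpow_add₀ hz, zpow_sub₀ hz, zpow_neg, h1z, h2z, h3z, h4z] <;>
        (try (field_simp [hz, hd])) <;> (try (generalize zeta3 ^ (d l) = w)) <;>
        (try (generalize zeta3 ^ (e j l) = w)) <;> (try ring)
  have hkey : E1.det + E2.det = 0 := by
    rw [hE1, hE2]
    apply det_key i (auxB S i e Fp Fm)
    · intro l; simp [rowP]
    · intro l; simp [rowM]
    · intro l; simp [rowP]
    · intro l; simp [rowM]
    · intro j l hj; simp [auxB, hj]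
    · intro j l hj; simp [auxB, hj]
  rw [hfac1, hfac2]
  rw [Matrix.det_mul, Matrix.det_mul, Matrix.det_mul, Matrix.det_mul]
  have : (auxR S i).det * E1.det * (auxT S).det + (auxR S i).det * E2.det * (auxT S).det
      = (auxR S i).det * (auxT S).det * (E1.det + E2.det) := by ring
  rw [this, hkey, mul_zero]
end
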